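/- The generating function of the (1,1) entries of the powers of the infinite Leslie matrix L is the inverse of the weighted kneading determinant: Σ_{n≥0} (L^n)_{11} z^n = Δ(z)^{-1} in ℂ[[z]]; equivalently, Δ(z) · Σ_{n≥0} (L^n)_{11} z^n = 1. -/

import Mathlib

/-- Addition of a natural number to a positive natural number,
yielding a positive natural number. -/
def pnatAdd (j : ℕ+) (k : ℕ) : ℕ+ :=
  ⟨(j : ℕ) + k, Nat.lt_of_lt_of_le j.pos (Nat.le_add_right _ _)⟩

/-- The weighted kneading determinant `Δ(z) = 1 − Σ_{n≥0} a_n C_1^n z^{n+1}`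
of the Leslie difference equation, where `C_1^n = ∏_{k=1}^n b_k`.  Its
constant coefficient is `1`, so it is a unit of `ℂ[[z]]` and `Δ(z)⁻¹` is
its genuine inverse. -/
noncomputable def kneadingDet (a : ℕ → ℂ) (b : ℕ+ → ℂ) : PowerSeries ℂ :=
  1 - PowerSeries.X
        * PowerSeries.mk (fun n => a n * ∏ k ∈ Finset.range n, b (pnatAdd 1 k))

lemma pnatAdd_zero : pnatAdd 1 0 = 1 := rfl

lemma pnatAdd_succ (m : ℕ) : pnatAdd 1 m + 1 = pnatAdd 1 (m + 1) := by
  apply PNat.coe_injective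
  rw [PNat.add_coe]
  simp [pnatAdd, Nat.add_assoc]

lemma pnatAdd_coe (m : ℕ) : ((pnatAdd 1 m : ℕ+) : ℕ) = 1 + m := rfl

lemma pnatAdd_succ_ne_one (m : ℕ) : pnatAdd 1 (m + 1) ≠ 1 := by
  intro h
  have h2 := congrArg (fun x : ℕ+ => (x : ℕ)) h
  simp only [pnatAdd_coe, PNat.one_coe] at h2
  omega

/-- The generating function of the `(1,1)` entries of the powers of
the infinite Leslie matrix `L` (realized as the endomorphism of `ℕ+ →₀ ℂ` with
`L e_j = a_{j-1} e_1 + b_j e_{j+1}`) is the inverse of the weighted kneading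
determinant: `Σ_{n≥0} (L^n)_{11} z^n = Δ(z)⁻¹`; equivalently,
`Δ(z) · Σ_{n≥0} (L^n)_{11} z^n = 1`. -/
theorem leslie_generating_function_one_one
    (a : ℕ → ℂ) (b : ℕ+ → ℂ)
    (L : (ℕ+ →₀ ℂ) →ₗ[ℂ] (ℕ+ →₀ ℂ))
    (hL : ∀ j : ℕ+, L (Finsupp.single j 1)
        = a ((j : ℕ) - 1) • Finsupp.single (1 : ℕ+) 1
          + b j • Finsupp.single (j + 1) 1) :
    PowerSeries.mk (fun n => ((L ^ n) (Finsupp.single (1 : ℕ+) 1)) (1 : ℕ+))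
        = (kneadingDet a b)⁻¹
    ∧ kneadingDet a b
        * PowerSeries.mk (fun n => ((L ^ n) (Finsupp.single (1 : ℕ+) 1)) (1 : ℕ+))
        = 1 := by
  set f : ℕ → ℂ := fun n => ((L ^ n) (Finsupp.single (1 : ℕ+) 1)) 1 with hf
  have hf0 : f 0 = 1 := by simp [hf]
  have hsucc : ∀ n, f (n + 1) = (L ((L ^ n) (Finsupp.single (1 : ℕ+) 1))) 1 := by
    intro n
    rw [hf]
    simp only [pow_succ', Module.End.mul_apply]
  have eval : ∀ n, (L ^ n) (Finsupp.single (1 : ℕ+) 1)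
        = ∑ m ∈ Finset.range (n + 1),
            (f (n - m) * ∏ k ∈ Finset.range m, b (pnatAdd 1 k))
              • Finsupp.single (pnatAdd 1 m) (1 : ℂ) →
      f (n + 1) = ∑ m ∈ Finset.range (n + 1),
          (f (n - m) * ∏ k ∈ Finset.range m, b (pnatAdd 1 k)) * a m := by
    intro n hn
    rw [hsucc n, hn, map_sum, Finsupp.finset_sum_apply]
    refine Finset.sum_congr rfl fun m _ => ?_
    rw [LinearMap.map_smul, hL (pnatAdd 1 m), pnatAdd_succ, pnatAdd_coe]
    simp only [Nat.add_sub_cancel_left]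
    rw [Finsupp.smul_apply, Finsupp.add_apply, Finsupp.smul_apply, Finsupp.smul_apply,
      Finsupp.single_eq_same, Finsupp.single_eq_of_ne' (pnatAdd_succ_ne_one m)]
    simp
  have key : ∀ n, (L ^ n) (Finsupp.single (1 : ℕ+) 1)
      = ∑ m ∈ Finset.range (n + 1),
          (f (n - m) * ∏ k ∈ Finset.range m, b (pnatAdd 1 k))
            • Finsupp.single (pnatAdd 1 m) (1 : ℂ) := by
    intro n
    induction n with
    | zero => simp [pnatAdd_zero, hf0]
    | succ n ih =>
      have ih2 := eval n ih
      have hstep : (L ^ (n + 1)) (Finsupp.single (1 : ℕ+) 1)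
          = (∑ m ∈ Finset.range (n + 1),
              (f (n - m) * ∏ k ∈ Finset.range m, b (pnatAdd 1 k)) * a m)
                • Finsupp.single (1 : ℕ+) (1 : ℂ)
            + ∑ m ∈ Finset.range (n + 1),
              (f (n - m) * ∏ k ∈ Finset.range (m + 1), b (pnatAdd 1 k))
                • Finsupp.single (pnatAdd 1 (m + 1)) (1 : ℂ) := by
        rw [pow_succ', Module.End.mul_apply, ih, map_sum]
        rw [Finset.sum_smul, ← Finset.sum_add_distrib]
        refine Finset.sum_congr rfl fun m _ => ?_
        rw [LinearMap.map_smul, hL (pnatAdd 1 m), pnatAdd_succ, pnatAdd_coe]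
        simp only [Nat.add_sub_cancel_left, Finset.prod_range_succ]
        rw [smul_add, smul_smul, smul_smul]
        ring_nf
      rw [hstep]
      conv_rhs => rw [Finset.sum_range_succ']
      simp only [pnatAdd_zero, Finset.range_zero, Finset.prod_empty, mul_one,
        Nat.sub_zero, Nat.succ_sub_succ_eq_sub]
      rw [← ih2, add_comm]
  have frec : ∀ n, f (n + 1)
      = ∑ m ∈ Finset.range (n + 1),
          (a m * ∏ k ∈ Finset.range m, b (pnatAdd 1 k)) * f (n - m) := by
    intro n
    rw [eval n (key n)]
    exact Finset.sum_congr rfl fun m _ => by ring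
  set F : PowerSeries ℂ := PowerSeries.mk f with hF
  set G : PowerSeries ℂ :=
    PowerSeries.mk (fun n => a n * ∏ k ∈ Finset.range n, b (pnatAdd 1 k)) with hG
  have hmul : kneadingDet a b * F = 1 := by
    have hΔ : kneadingDet a b = 1 - PowerSeries.X * G := rfl
    rw [hΔ, sub_mul, one_mul, mul_assoc]
    ext n
    rcases n with _ | n
    · simp [hF, hf0, PowerSeries.coeff_zero_eq_constantCoeff]
    · rw [map_sub, PowerSeries.coeff_succ_X_mul, PowerSeries.coeff_mul]
      rw [Finset.Nat.sum_antidiagonal_eq_sum_range_succ_mk]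
      simp only [hF, hG, PowerSeries.coeff_mk, PowerSeries.coeff_one, Nat.succ_ne_zero,
        if_false, Nat.succ_eq_add_one]
      rw [frec n, sub_self]
  refine ⟨?_, hmul⟩
  have hc : PowerSeries.constantCoeff (kneadingDet a b) ≠ 0 := by
    simp [kneadingDet]
  rw [PowerSeries.eq_inv_iff_mul_eq_one hc, mul_comm]
  exact hmul
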